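/- Let K be a field of characteristic 0 with finite maximal abelian subextension, let λ be the number of roots of unity in K, and let n be a positive integer. If x ∈ Kˣ is a (λn)th power in K(ζ_{λn}), then there exist y ∈ Kˣ and a λth root of unity ε ∈ K such that x = ε·yⁿ. -/

import Mathlib

noncomputable section

/-- The maximal abelian subextension of `K/ℚ`: the compositum of all subextensions of `K/ℚ`
which are Galois over `ℚ` with abelian Galois group. -/
def maxAb (K : Type*) [Field K] [CharZero K] : IntermediateField ℚ K :=
  ⨆ F ∈ {F : IntermediateField ℚ K |
      IsGalois ℚ ↥F ∧ ∀ σ τ : ↥F ≃ₐ[ℚ] ↥F, σ * τ = τ * σ}, F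

/-- The set of positive integers `Λ` satisfying the Chevalley–Bass property for the field `F`:
for every `n > 0`, `(F(ζ_{Λn})ˣ)^{Λn} ∩ Fˣ ⊆ (Fˣ)ⁿ`, where `F(ζ_{Λn})` is the field obtained
by adjoining all `Λn`-th roots of unity inside the algebraically closed extension `Ω`. -/
def cbSet (F Ω : Type*) [Field F] [Field Ω] [Algebra F Ω] : Set ℕ :=
  {Λ | 0 < Λ ∧ ∀ n : ℕ, 0 < n → ∀ x : F, x ≠ 0 →
    (∃ y ∈ IntermediateField.adjoin F {z : Ω | z ^ (Λ * n) = 1},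
        y ^ (Λ * n) = algebraMap F Ω x) →
    ∃ z : F, z ^ n = x}

/-- The Chevalley–Bass number of a field `F` (computed inside an algebraic closure `Ω`):
the smallest positive integer in `cbSet F Ω`. -/
def chevalleyBass (F Ω : Type*) [Field F] [Field Ω] [Algebra F Ω] : ℕ :=
  sInf (cbSet F Ω)

/-- The number of roots of unity contained in a field `F`. -/
def numRootsOfUnity (F : Type*) [Field F] : ℕ :=
  Nat.card (CommGroup.torsion Fˣ)

/-- The conductor of the maximal abelian subextension of `K/ℚ`: the smallest positive `f`
such that `K_ab ⊆ ℚ(ζ_f)` inside the algebraic closure `Ω`. -/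
def conductorAb (K Ω : Type*) [Field K] [CharZero K] [Field Ω] [Algebra K Ω]
    [Algebra ℚ Ω] [IsScalarTower ℚ K Ω] : ℕ :=
  sInf {f | 0 < f ∧ (maxAb K).map (IsScalarTower.toAlgHom ℚ K Ω)
    ≤ IntermediateField.adjoin ℚ {z : Ω | z ^ f = 1}}

end

set_option maxHeartbeats 1000000

private lemma fixed_mem_range' {F E : Type*} [Field F] [Field E] [Algebra F E]
    [FiniteDimensional F E] [IsGalois F E] (z : E) (hz : ∀ σ : E ≃ₐ[F] E, σ z = z) :
    ∃ w : F, algebraMap F E w = z := by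
  have h1 : z ∈ IntermediateField.fixedField
      (IntermediateField.fixingSubgroup (⊥ : IntermediateField F E)) := fun σ => hz σ
  rw [IsGalois.fixedField_fixingSubgroup ⊥] at h1
  obtain ⟨w, hw⟩ := IntermediateField.mem_bot.mp h1
  exact ⟨w, hw⟩

private lemma main_aux (K Ω : Type*) [Field K] [CharZero K] [Field Ω] [Algebra K Ω]
    [IsAlgClosed Ω] [Algebra.IsAlgebraic K Ω]
    (lam n : ℕ) (hn : 0 < n) (hlampos : 0 < lam)
    (hcard : Nat.card (CommGroup.torsion Kˣ) = lam)
    (x : K) (hx : x ≠ 0)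
    (h : ∃ y ∈ IntermediateField.adjoin K {z : Ω | z ^ (lam * n) = 1},
        y ^ (lam * n) = algebraMap K Ω x) :
    ∃ (y ε : K), ε ^ lam = 1 ∧ x = ε * y ^ n := by
  haveI : CharZero Ω := charZero_of_injective_algebraMap (algebraMap K Ω).injective
  set m : ℕ := lam * n with hmdef
  have hm : 0 < m := Nat.mul_pos hlampos hn
  set mp : ℕ+ := ⟨m, hm⟩ with hmp
  haveI : NeZero m := ⟨hm.ne'⟩
  obtain ⟨ζΩ, hζΩ⟩ := HasEnoughRootsOfUnity.exists_primitiveRoot Ω m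
  set L : IntermediateField K Ω := IntermediateField.adjoin K {z : Ω | z ^ m = 1} with hL
  set M := ↥L
  have hSet : {z : Ω | z ^ m = 1}
      = {b : Ω | ∃ a : ℕ, a ∈ ({m} : Set ℕ) ∧ a ≠ 0 ∧ b ^ a = 1} := by
    ext z
    constructor
    · exact fun hz => ⟨m, rfl, hm.ne', hz⟩
    · rintro ⟨a, ha, -, hz⟩
      rw [Set.mem_singleton_iff] at ha
      subst ha
      exact hz
  have h1 : L.toSubalgebra = Algebra.adjoin K {ζΩ} := by
    rw [hL, IntermediateField.adjoin_toSubalgebra_of_isAlgebraic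
      (fun z _ => Algebra.IsAlgebraic.isAlgebraic z), hSet,
      ← IsCyclotomicExtension.adjoin_roots_cyclotomic_eq_adjoin_nth_roots hζΩ,
      IsCyclotomicExtension.adjoin_roots_cyclotomic_eq_adjoin_root_cyclotomic hζΩ]
  haveI hcyc : IsCyclotomicExtension {m} K M := by
    haveI := hζΩ.adjoin_isCyclotomicExtension K
    exact IsCyclotomicExtension.equiv {m} K _ (Subalgebra.equivOfEq _ _ h1.symm)
  haveI : FiniteDimensional K M := IsCyclotomicExtension.finiteDimensional {m} K M
  haveI : IsGalois K M := IsCyclotomicExtension.isGalois {m} K M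
  -- the primitive root inside M
  have hζΩL : ζΩ ∈ L := by
    rw [hL]
    exact IntermediateField.subset_adjoin K _ hζΩ.pow_eq_one
  set ζ : M := ⟨ζΩ, hζΩL⟩ with hζdef
  have hζ : IsPrimitiveRoot ζ m := by
    have h2 : IsPrimitiveRoot ((ζ : Ω)) m := hζΩ
    exact IsPrimitiveRoot.coe_submonoidClass_iff.mp h2
  -- Y
  obtain ⟨y, hyL, hy⟩ := h
  set Y : M := ⟨y, hyL⟩ with hYdef
  have hYm : Y ^ m = algebraMap K M x := by
    apply Subtype.ext
    rw [SubmonoidClass.coe_pow]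
    rw [IsScalarTower.algebraMap_apply K M Ω x] at hy
    exact hy
  have hY0 : Y ≠ 0 := by
    intro h0
    apply hx
    have h2 := hYm
    rw [h0, zero_pow hm.ne'] at h2
    exact (map_eq_zero_iff (algebraMap K M) (algebraMap K M).injective).mp h2.symm
  -- commutativity of the Galois group
  have hcomm : ∀ σ τ : M ≃ₐ[K] M, ∀ z : M, σ (τ z) = τ (σ z) := by
    intro σ τ z
    have hc : σ * τ = τ * σ :=
      (IsCyclotomicExtension.isMulCommutative {m} K M).is_comm.comm σ τ
    calc σ (τ z) = (σ * τ) z := rfl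
      _ = (τ * σ) z := by rw [hc]
      _ = τ (σ z) := rfl
  -- action exponents
  have key : ∀ σ : M ≃ₐ[K] M, ∃ a : ℕ, ∀ z : M, z ^ m = 1 → σ z = z ^ a := by
    intro σ
    have h1 : (σ ζ) ^ m = 1 := by rw [← map_pow, hζ.pow_eq_one, map_one]
    obtain ⟨a, -, ha⟩ := hζ.eq_pow_of_pow_eq_one h1
    refine ⟨a, fun z hz => ?_⟩
    obtain ⟨k, -, rfl⟩ := hζ.eq_pow_of_pow_eq_one hz
    rw [map_pow, ← ha, ← pow_mul, ← pow_mul, mul_comm a k]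
  choose a haAct using key
  -- basic nonvanishing
  have hσY0 : ∀ σ : M ≃ₐ[K] M, σ Y ≠ 0 := fun σ => by
    rw [map_ne_zero]; exact hY0
  have hu0 : ∀ σ : M ≃ₐ[K] M, σ Y / Y ≠ 0 := fun σ => div_ne_zero (hσY0 σ) hY0
  have hYfix : ∀ σ : M ≃ₐ[K] M, σ (Y ^ m) = Y ^ m := fun σ => by
    rw [hYm, AlgEquiv.commutes]
  have hum : ∀ σ : M ≃ₐ[K] M, (σ Y / Y) ^ m = 1 := fun σ => by
    rw [div_pow, ← map_pow, hYfix, div_self (pow_ne_zero _ hY0)]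
  -- the ideal of exponents r such that (σ ↦ (σY/Y)^r) is a "coboundary"
  let I : Ideal ℤ :=
    { carrier := {r : ℤ | ∃ c : M, c ^ m = 1 ∧ ∀ σ : M ≃ₐ[K] M, (σ Y / Y) ^ r = σ c / c}
      zero_mem' := ⟨1, one_pow m, fun σ => by rw [zpow_zero, map_one, div_one]⟩
      add_mem' := by
        rintro r s ⟨c, hc1, hc2⟩ ⟨d, hd1, hd2⟩
        refine ⟨c * d, by rw [mul_pow, hc1, hd1, one_mul], fun σ => ?_⟩
        rw [zpow_add₀ (hu0 σ), hc2 σ, hd2 σ, map_mul, div_mul_div_comm]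
      smul_mem' := by
        rintro s r ⟨c, hc1, hc2⟩
        have hc0 : c ≠ 0 := by
          intro h0; rw [h0, zero_pow hm.ne'] at hc1; exact zero_ne_one hc1
        refine ⟨c ^ s, ?_, fun σ => ?_⟩
        · rw [← zpow_natCast (c ^ s), ← zpow_mul, mul_comm s (m : ℤ), zpow_mul,
            zpow_natCast, hc1, one_zpow]
        · rw [smul_eq_mul, mul_comm s r, zpow_mul, hc2 σ, div_zpow, ← map_zpow₀] }
  have hmI : (m : ℤ) ∈ I := ⟨1, one_pow m, fun σ => by
    rw [zpow_natCast, hum σ, map_one, div_one]⟩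
  have haI : ∀ τ : M ≃ₐ[K] M, ((a τ : ℤ) - 1) ∈ I := by
    intro τ
    refine ⟨τ Y / Y, ?_, fun σ => ?_⟩
    · rw [div_pow, ← map_pow, hYfix, div_self (pow_ne_zero _ hY0)]
    · have e1 : σ (τ Y / Y) * (σ Y / Y) = τ (σ Y / Y) * (τ Y / Y) := by
        rw [map_div₀, map_div₀, div_mul_div_cancel₀ (hσY0 σ),
          div_mul_div_cancel₀ (hσY0 τ), hcomm σ τ Y]
      have e2 : (σ Y / Y) ^ ((a τ : ℤ) - 1) = σ (τ Y / Y) / (τ Y / Y) := by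
        rw [zpow_sub₀ (hu0 σ), zpow_natCast, zpow_one, ← haAct τ _ (hum σ),
          div_eq_div_iff (hu0 σ) (hu0 τ)]
        exact e1.symm
      exact e2
  obtain ⟨g, hg⟩ := (IsPrincipalIdealRing.principal I).principal
  rw [Ideal.submodule_span_eq] at hg
  have hgm : g ∣ (m : ℤ) := Ideal.mem_span_singleton.mp (hg ▸ hmI)
  have hg0 : g ≠ 0 := by
    rintro rfl
    rw [zero_dvd_iff] at hgm
    exact hm.ne' (by exact_mod_cast hgm)
  set g' : ℕ := g.natAbs with hg'def
  have hg'0 : 0 < g' := Int.natAbs_pos.mpr hg0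
  have hg'm : g' ∣ m := by
    have h2 : (g' : ℤ) ∣ (m : ℤ) := (Int.natAbs_dvd).mpr hgm
    exact_mod_cast h2
  -- z₀, an element of K of order g'
  set z₀ : M := ζ ^ (m / g') with hz₀def
  have hz₀ : IsPrimitiveRoot z₀ g' := hζ.pow hm (Nat.div_mul_cancel hg'm).symm
  have hz₀m : z₀ ^ m = 1 := by
    rw [hz₀def, ← pow_mul, mul_comm, pow_mul, hζ.pow_eq_one, one_pow]
  have hz₀g' : z₀ ^ g' = 1 := hz₀.pow_eq_one
  have hz₀0 : z₀ ≠ 0 := by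
    intro h0; rw [h0, zero_pow hg'0.ne'] at hz₀g'; exact zero_ne_one hz₀g'
  have hz₀gz : z₀ ^ (g : ℤ) = 1 := by
    rcases Int.natAbs_eq g with hpm | hpm
    · rw [hpm, zpow_natCast, hz₀g']
    · rw [hpm, zpow_neg, zpow_natCast, hz₀g', inv_one]
  have hz₀fix : ∀ σ : M ≃ₐ[K] M, σ z₀ = z₀ := by
    intro σ
    obtain ⟨t, ht⟩ := Ideal.mem_span_singleton.mp (hg ▸ haI σ)
    rw [haAct σ _ hz₀m]
    have e : ((a σ : ℕ) : ℤ) = 1 + g * t := by linarith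
    calc z₀ ^ (a σ) = z₀ ^ ((a σ : ℕ) : ℤ) := by rw [zpow_natCast]
      _ = z₀ ^ ((1 : ℤ) + g * t) := by rw [e]
      _ = z₀ := by rw [zpow_add₀ hz₀0, zpow_one, zpow_mul, hz₀gz, one_zpow, mul_one]
  obtain ⟨w₀, hw₀⟩ := fixed_mem_range' z₀ hz₀fix
  -- g' divides lam
  have hw₀prim : IsPrimitiveRoot w₀ g' := by
    refine IsPrimitiveRoot.of_map_of_injective (f := algebraMap K M) ?_
      (algebraMap K M).injective
    rwa [hw₀]
  have hw₀0 : w₀ ≠ 0 := by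
    intro h0
    rw [h0, map_zero] at hw₀
    exact hz₀0 hw₀.symm
  have hg'lam : g' ∣ lam := by
    set wu : Kˣ := Units.mk0 w₀ hw₀0 with hwu
    have hwug : wu ^ g' = 1 := by
      ext
      rw [Units.val_pow_eq_pow_val, Units.val_one]
      exact hw₀prim.pow_eq_one
    have hmem : wu ∈ CommGroup.torsion Kˣ := by
      rw [CommGroup.mem_torsion]
      exact isOfFinOrder_iff_pow_eq_one.mpr ⟨g', hg'0, hwug⟩
    have hdvd := Subgroup.orderOf_dvd_natCard (CommGroup.torsion Kˣ) hmem
    rw [hcard] at hdvd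
    have horder : orderOf wu = g' := by
      rw [← orderOf_units]
      exact hw₀prim.eq_orderOf.symm
    rwa [horder] at hdvd
  -- lam ∈ I, and the coboundary element c
  have hlamI : ((lam : ℕ) : ℤ) ∈ I := by
    rw [hg]
    refine Ideal.mem_span_singleton.mpr ?_
    have h2 : (g' : ℤ) ∣ (lam : ℤ) := by exact_mod_cast hg'lam
    exact (Int.natAbs_dvd).mp h2
  obtain ⟨c, hc1, hc2⟩ := hlamI
  have hc0 : c ≠ 0 := by
    intro h0; rw [h0, zero_pow hm.ne'] at hc1; exact zero_ne_one hc1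
  -- the invariant element W
  set W : M := Y ^ lam / c with hWdef
  have hW0 : W ≠ 0 := div_ne_zero (pow_ne_zero _ hY0) hc0
  have hWfix : ∀ σ : M ≃ₐ[K] M, σ W = W := by
    intro σ
    have e := hc2 σ
    rw [zpow_natCast, div_pow, ← map_pow] at e
    have hσc0 : σ c ≠ 0 := by rw [map_ne_zero]; exact hc0
    have hYl0 : Y ^ lam ≠ 0 := pow_ne_zero _ hY0
    rw [div_eq_div_iff hYl0 hc0] at e
    rw [hWdef, map_div₀, div_eq_div_iff hσc0 hc0, e, mul_comm]
  obtain ⟨w, hw⟩ := fixed_mem_range' W hWfix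
  have hw0 : w ≠ 0 := by
    intro h0
    rw [h0, map_zero] at hw
    exact hW0 hw.symm
  refine ⟨w, x / w ^ n, ?_, ?_⟩
  · -- (x / w ^ n) ^ lam = 1
    have hWc : W * c = Y ^ lam := div_mul_cancel₀ _ hc0
    have hxM : algebraMap K M x = W ^ n * c ^ n := by
      rw [← mul_pow, hWc, ← pow_mul, ← hmdef]
      exact hYm.symm
    apply (algebraMap K M).injective
    rw [map_pow, map_div₀, map_pow, hw, map_one, hxM, mul_comm, mul_div_assoc,
      div_self (pow_ne_zero _ hW0), mul_one, ← pow_mul, mul_comm n lam, ← hmdef]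
    exact hc1
  · rw [div_mul_cancel₀ _ (pow_ne_zero _ hw0)]

/-- Let `K` be a field of characteristic 0 with finite maximal abelian subextension, let `λ`
be the number of roots of unity in `K`, and let `n` be a positive integer. If `x ∈ Kˣ` is a
`(λn)`-th power in `K(ζ_{λn})`, then there exist `y ∈ Kˣ` and a `λ`-th root of unity
`ε ∈ K` such that `x = ε·yⁿ`. -/
theorem stmt_11 (K Ω : Type*) [Field K] [CharZero K] [Field Ω] [Algebra K Ω]
    [IsAlgClosed Ω] [Algebra.IsAlgebraic K Ω]
    (hfin : FiniteDimensional ℚ ↥(maxAb K)) (n : ℕ) (hn : 0 < n)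
    (x : K) (hx : x ≠ 0)
    (h : ∃ y ∈ IntermediateField.adjoin K {z : Ω | z ^ (numRootsOfUnity K * n) = 1},
        y ^ (numRootsOfUnity K * n) = algebraMap K Ω x) :
    ∃ (y ε : K), ε ^ numRootsOfUnity K = 1 ∧ x = ε * y ^ n := by
  rcases Nat.eq_zero_or_pos (numRootsOfUnity K) with h0 | hpos
  · obtain ⟨y, -, hy⟩ := h
    rw [h0, zero_mul, pow_zero] at hy
    have hx1 : x = 1 := (algebraMap K Ω).injective (by rw [← hy, map_one])
    exact ⟨1, 1, by rw [h0, pow_zero], by rw [hx1, one_pow, one_mul]⟩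
  · exact main_aux K Ω (numRootsOfUnity K) n hn hpos rfl x hx h
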